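/- Let p be a probability distribution on {1,...,n} with n even, and let q be any monotone decreasing distribution on {1,...,n} (meaning q_i ≥ q_j whenever i ≤ j). Define γ_i = (p_{2i} - p_{2i-1})/2 if p_{2i-1} < p_{2i}, and γ_i = 0 otherwise, for i = 1,...,n/2. Then the total variation distance satisfies d_TV(p, q) ≥ ∑_{i=1}^{n/2} γ_i. -/
import Mathlib


open Finset

lemma sum_pair_aux (m : ℕ) (f : ℕ → ℝ) :
    ∑ i ∈ Finset.Icc 1 (2 * m), f i =
      ∑ i ∈ Finset.Icc 1 m, (f (2 * i - 1) + f (2 * i)) := by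
  induction m with
  | zero => simp
  | succ k ih =>
      have h1 : 2 * (k + 1) = (2 * k + 1) + 1 := by ring
      rw [h1, Finset.sum_Icc_succ_top (by omega), Finset.sum_Icc_succ_top (by omega),
        Finset.sum_Icc_succ_top (by omega), ih]
      have h2 : 2 * (k + 1) - 1 = 2 * k + 1 := by omega
      have h3 : 2 * (k + 1) = 2 * k + 1 + 1 := by omega
      rw [h2, h3]
      ring

theorem monotone_distance_pairing (n : ℕ) (hn : Even n) (hn0 : 0 < n)
    (p q : ℕ → ℝ)
    (hp0 : ∀ i ∈ Finset.Icc 1 n, 0 ≤ p i) (hp1 : ∑ i ∈ Finset.Icc 1 n, p i = 1)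
    (hq0 : ∀ i ∈ Finset.Icc 1 n, 0 ≤ q i) (hq1 : ∑ i ∈ Finset.Icc 1 n, q i = 1)
    (hqmono : ∀ i ∈ Finset.Icc 1 n, ∀ j ∈ Finset.Icc 1 n, i ≤ j → q j ≤ q i) :
    (1 / 2) * ∑ i ∈ Finset.Icc 1 n, |p i - q i| ≥
      ∑ i ∈ Finset.Icc 1 (n / 2),
        (if p (2 * i - 1) < p (2 * i) then (p (2 * i) - p (2 * i - 1)) / 2 else 0) := by
  obtain ⟨m, hm⟩ := hn
  have hm' : n = 2 * m := by omega
  subst hm'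
  have hdiv : 2 * m / 2 = m := by omega
  rw [hdiv, sum_pair_aux]
  rw [ge_iff_le, ← sub_nonneg, Finset.mul_sum, ← Finset.sum_sub_distrib]
  apply Finset.sum_nonneg
  intro i hi
  simp only [Finset.mem_Icc] at hi
  have h1 : (2 * i - 1) ∈ Finset.Icc 1 (2 * m) := by simp [Finset.mem_Icc]; omega
  have h2 : (2 * i) ∈ Finset.Icc 1 (2 * m) := by simp [Finset.mem_Icc]; omega
  have hq := hqmono _ h1 _ h2 (by omega)
  set a := p (2 * i - 1)
  set b := p (2 * i)
  set x := q (2 * i - 1)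
  set y := q (2 * i)
  have hax : x - a ≤ |a - x| := by rw [abs_sub_comm]; exact le_abs_self _
  have hby : b - y ≤ |b - y| := le_abs_self _
  split_ifs with h
  · have : b - a ≤ |a - x| + |b - y| := by
      have : b - a = (b - y) + (y - x) + (x - a) := by ring
      rw [this]
      have : y - x ≤ 0 := by linarith
      linarith
    linarith
  · have := abs_nonneg (a - x)
    have := abs_nonneg (b - y)
    linarith
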